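/- Let λ = (λ₁ ≥ … ≥ λ_k ≥ 0) and ν = (ν₁ ≥ … ≥ ν_k ≥ 0) be partitions with at most k parts (padded with zeros) such that ν_i ≤ λ_i for all i, and let f^{λ/ν} denote the number of standard Young tableaux of the skew shape λ/ν. Then f^{λ/ν} = Σ_{σ ∈ S_k} sgn(σ) · (|λ| − |ν|)! / ∏_{i=1}^{k} (λ_i − ν_{σ(i)} + σ(i) − i)!, where |λ| = λ₁+…+λ_k, |ν| = ν₁+…+ν_k, and any summand containing a factorial of a negative integer is interpreted as 0. -/

import Mathlib

open Filter Topology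

/-- The length of the `i`-th row (1-indexed) of the shape given by the list `lam`. -/
def rowLen (lam : List ℕ) (i : ℕ) : ℕ := lam.getD (i - 1) 0

/-- The cells of the Young diagram of shape `lam`, with 1-indexed rows and columns:
`(i,j)` is a cell iff `1 ≤ i ≤ k` and `1 ≤ j ≤ lam_i`. -/
def cells (lam : List ℕ) : Set (ℕ × ℕ) :=
  {c | 1 ≤ c.1 ∧ c.1 ≤ lam.length ∧ 1 ≤ c.2 ∧ c.2 ≤ rowLen lam c.1}

/-- `T` is a standard Young tableau of shape `lam`: it fills the cells of the diagram
bijectively with `1,…,n` (where `n = |lam|`), is `0` outside the diagram, and increases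
along rows and down columns. -/
def IsSYT (lam : List ℕ) (T : ℕ × ℕ → ℕ) : Prop :=
  (∀ c, c ∉ cells lam → T c = 0) ∧
  Set.BijOn T (cells lam) (Set.Icc 1 lam.sum) ∧
  (∀ i j, (i, j) ∈ cells lam → (i, j + 1) ∈ cells lam → T (i, j) < T (i, j + 1)) ∧
  (∀ i j, (i, j) ∈ cells lam → (i + 1, j) ∈ cells lam → T (i, j) < T (i + 1, j))

/-- The number `f^lam` of standard Young tableaux of shape `lam`. -/
noncomputable def sytCount (lam : List ℕ) : ℕ := {T | IsSYT lam T}.ncard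

/-- The probability that a uniformly random standard Young tableau of shape `lam`
satisfies the predicate `P`. -/
noncomputable def sytProb (lam : List ℕ) (P : (ℕ × ℕ → ℕ) → Prop) : ℝ :=
  ({T | IsSYT lam T ∧ P T}.ncard : ℝ) / (sytCount lam : ℝ)

/-- The sorting probability `SP(lam, c₁, c₂) = Pr(T(c₁) > T(c₂)) - Pr(T(c₂) > T(c₁))`. -/
noncomputable def SP (lam : List ℕ) (c1 c2 : ℕ × ℕ) : ℝ :=
  sytProb lam (fun T => T c2 < T c1) - sytProb lam (fun T => T c1 < T c2)

/-- The cells of the skew Young diagram `λ/ν` (1-indexed): `(i,j)` with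
`1 ≤ i ≤ k` and `ν_i < j ≤ λ_i`. -/
def skewCells (lam nu : List ℕ) : Set (ℕ × ℕ) :=
  {c | 1 ≤ c.1 ∧ c.1 ≤ lam.length ∧ rowLen nu c.1 < c.2 ∧ c.2 ≤ rowLen lam c.1}

/-- `T` is a standard Young tableau of skew shape `λ/ν`: it fills the cells of `λ/ν`
bijectively with `1,…,|λ|−|ν|`, is `0` outside, and increases along rows and down
columns. -/
def IsSkewSYT (lam nu : List ℕ) (T : ℕ × ℕ → ℕ) : Prop :=
  (∀ c, c ∉ skewCells lam nu → T c = 0) ∧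
  Set.BijOn T (skewCells lam nu) (Set.Icc 1 (lam.sum - nu.sum)) ∧
  (∀ i j, (i, j) ∈ skewCells lam nu → (i, j + 1) ∈ skewCells lam nu → T (i, j) < T (i, j + 1)) ∧
  (∀ i j, (i, j) ∈ skewCells lam nu → (i + 1, j) ∈ skewCells lam nu → T (i, j) < T (i + 1, j))

/-- The number `f^{λ/ν}` of standard Young tableaux of skew shape `λ/ν`. -/
noncomputable def skewCount (lam nu : List ℕ) : ℕ := {T | IsSkewSYT lam nu T}.ncard

section Comb

variable {k : ℕ}

lemma ofFn_getD (f : Fin k → ℕ) (m : ℕ) :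
    (List.ofFn f).getD m 0 = if h : m < k then f ⟨m, h⟩ else 0 := by
  split
  · next h =>
    rw [List.getD_eq_getElem _ _ (by simpa using h)]
    simp
  · next h =>
    apply List.getD_eq_default
    simpa using le_of_not_gt h

lemma mem_skewCells_iff (lam nu : Fin k → ℕ) (c : ℕ × ℕ) :
    c ∈ skewCells (List.ofFn lam) (List.ofFn nu) ↔
      ∃ r : Fin k, c.1 = (r : ℕ) + 1 ∧ nu r < c.2 ∧ c.2 ≤ lam r := by
  constructor
  · rintro ⟨h1, h2, h3, h4⟩
    rw [List.length_ofFn] at h2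
    have hlt : c.1 - 1 < k := by omega
    refine ⟨⟨c.1 - 1, hlt⟩, by simp; omega, ?_, ?_⟩
    · rwa [rowLen, ofFn_getD, dif_pos hlt] at h3
    · rwa [rowLen, ofFn_getD, dif_pos hlt] at h4
  · rintro ⟨r, h1, h2, h3⟩
    have hlt : c.1 - 1 < k := by omega
    have hr : (⟨c.1 - 1, hlt⟩ : Fin k) = r := by
      apply Fin.ext; simp; omega
    refine ⟨by omega, ?_, ?_, ?_⟩
    · rw [List.length_ofFn]; omega
    · rw [rowLen, ofFn_getD, dif_pos hlt, hr]; exact h2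
    · rw [rowLen, ofFn_getD, dif_pos hlt, hr]; exact h3

lemma skewCells_self (lam : Fin k → ℕ) : skewCells (List.ofFn lam) (List.ofFn lam) = ∅ := by
  ext c
  rw [mem_skewCells_iff]
  simp only [Set.mem_empty_iff_false, iff_false]
  rintro ⟨r, _, h2, h3⟩
  omega

lemma skew_base (lam : Fin k → ℕ) :
    skewCount (List.ofFn lam) (List.ofFn lam) = 1 := by
  have h0 : (List.ofFn lam).sum - (List.ofFn lam).sum = 0 := by omega
  have : {T | IsSkewSYT (List.ofFn lam) (List.ofFn lam) T} = {fun _ => 0} := by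
    ext T
    simp only [Set.mem_setOf_eq, Set.mem_singleton_iff]
    constructor
    · rintro ⟨h1, _, _, _⟩
      funext c
      exact h1 c (by rw [skewCells_self]; exact Set.notMem_empty c)
    · rintro rfl
      refine ⟨fun _ _ => rfl, ?_, ?_, ?_⟩
      · rw [skewCells_self, h0]
        constructor
        · intro c hc; exact absurd hc (Set.notMem_empty c)
        · constructor
          · intro c hc; exact absurd hc (Set.notMem_empty c)
          · simp
      · intro i j hij; rw [skewCells_self] at hij; exact absurd hij (Set.notMem_empty _)
      · intro i j hij; rw [skewCells_self] at hij; exact absurd hij (Set.notMem_empty _)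
  rw [skewCount, this, Set.ncard_singleton]


lemma getD_le_sum (L : List ℕ) (m : ℕ) : L.getD m 0 ≤ L.sum := by
  induction L generalizing m with
  | nil => simp
  | cons a L ih =>
    cases m with
    | zero => simp
    | succ m =>
      simp only [List.getD_cons_succ, List.sum_cons]
      exact le_add_left (ih m)

lemma skew_finite (lam nu : List ℕ) : {T | IsSkewSYT lam nu T}.Finite := by
  classical
  set n := lam.sum - nu.sum with hn
  set C : Finset (ℕ × ℕ) := (Finset.range (lam.length + 1)) ×ˢ (Finset.range (lam.sum + 1))
    with hC
  have hcells : ∀ c ∈ skewCells lam nu, c ∈ C := by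
    rintro ⟨i, j⟩ ⟨h1, h2, h3, h4⟩
    have hj : rowLen lam i ≤ lam.sum := getD_le_sum _ _
    simp only [hC, Finset.mem_product, Finset.mem_range]
    constructor <;> simp at * <;> omega
  set F : (ℕ × ℕ → ℕ) → (C → Fin (n + 1)) :=
    fun T c => ⟨min (T c.val) n, by omega⟩ with hF
  have hinj : Set.InjOn F {T | IsSkewSYT lam nu T} := by
    intro T hT T' hT' hEq
    have hval : ∀ c : ℕ × ℕ, c ∈ C → min (T c) n = min (T' c) n := by
      intro c hc
      have := congrFun hEq ⟨c, hc⟩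
      simpa [hF] using congrArg Fin.val this
    funext c
    by_cases hcc : c ∈ skewCells lam nu
    · have h1 : T c ∈ Set.Icc 1 n := hT.2.1.mapsTo hcc
      have h2 : T' c ∈ Set.Icc 1 n := hT'.2.1.mapsTo hcc
      have := hval c (hcells c hcc)
      rw [min_eq_left h1.2, min_eq_left h2.2] at this
      exact this
    · rw [hT.1 c hcc, hT'.1 c hcc]
  exact Set.Finite.of_finite_image (Set.toFinite _) hinj

lemma ncard_biUnion {α ι : Type*} [DecidableEq ι] (R : Finset ι) (f : ι → Set α)
    (hfin : ∀ r ∈ R, (f r).Finite)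
    (hdisj : ∀ r ∈ R, ∀ s ∈ R, r ≠ s → Disjoint (f r) (f s)) :
    (⋃ r ∈ R, f r).ncard = ∑ r ∈ R, (f r).ncard := by
  induction R using Finset.induction with
  | empty => simp
  | @insert a R' ha ih =>
    rw [Finset.set_biUnion_insert, Finset.sum_insert ha]
    have hdisj2 : Disjoint (f a) (⋃ r ∈ R', f r) := by
      rw [Set.disjoint_left]
      intro x hx hx2
      rw [Set.mem_iUnion₂] at hx2
      obtain ⟨r, hr, hxr⟩ := hx2
      have hne : a ≠ r := by rintro rfl; exact ha hr
      exact Set.disjoint_left.1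
        (hdisj a (Finset.mem_insert_self a R') r (Finset.mem_insert_of_mem hr) hne) hx hxr
    rw [Set.ncard_union_eq hdisj2 (hfin a (Finset.mem_insert_self a R'))
      (Set.Finite.biUnion (R'.finite_toSet) (fun r hr => hfin r (Finset.mem_insert_of_mem hr)))]
    rw [ih (fun r hr => hfin r (Finset.mem_insert_of_mem hr))
      (fun r hr s hs hne => hdisj r (Finset.mem_insert_of_mem hr) s (Finset.mem_insert_of_mem hs) hne)]


/-- Cells of the decremented shape. -/
lemma skewCells_decr (lam nu : Fin k → ℕ) (r : Fin k) (h : nu r < lam r) :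
    skewCells (List.ofFn (Function.update lam r (lam r - 1))) (List.ofFn nu) =
      skewCells (List.ofFn lam) (List.ofFn nu) \ {((r : ℕ) + 1, lam r)} := by
  ext c
  rw [Set.mem_diff, mem_skewCells_iff, mem_skewCells_iff, Set.mem_singleton_iff]
  constructor
  · rintro ⟨s, h1, h2, h3⟩
    by_cases hs : s = r
    · subst hs
      rw [Function.update_self] at h3
      refine ⟨⟨s, h1, h2, by omega⟩, ?_⟩
      intro hc
      rw [Prod.ext_iff] at hc
      omega
    · rw [Function.update_of_ne hs] at h3
      refine ⟨⟨s, h1, h2, h3⟩, ?_⟩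
      intro hc
      rw [Prod.ext_iff] at hc
      exact hs (Fin.ext (by omega))
  · rintro ⟨⟨s, h1, h2, h3⟩, hne⟩
    by_cases hs : s = r
    · subst hs
      refine ⟨s, h1, h2, ?_⟩
      rw [Function.update_self]
      have : c.2 ≠ lam s := by
        intro hc
        exact hne (Prod.ext (by omega) (by omega))
      omega
    · exact ⟨s, h1, h2, by rw [Function.update_of_ne hs]; exact h3⟩

lemma newc_mem (lam nu : Fin k → ℕ) (r : Fin k) (h : nu r < lam r) :
    ((r : ℕ) + 1, lam r) ∈ skewCells (List.ofFn lam) (List.ofFn nu) :=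
  (mem_skewCells_iff lam nu _).2 ⟨r, rfl, h, le_rfl⟩

lemma sum_decr (lam : Fin k → ℕ) (r : Fin k) (h : 1 ≤ lam r) :
    (List.ofFn (Function.update lam r (lam r - 1))).sum = (List.ofFn lam).sum - 1 := by
  rw [List.sum_ofFn, List.sum_ofFn, Finset.sum_update_of_mem (Finset.mem_univ r)]
  have h2 := Finset.add_sum_erase Finset.univ lam (Finset.mem_univ r)
  rw [Finset.erase_eq] at h2
  omega

lemma sum_nu_le (lam nu : Fin k → ℕ) (hsub : ∀ i, nu i ≤ lam i) :
    (List.ofFn nu).sum ≤ (List.ofFn lam).sum := by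
  rw [List.sum_ofFn, List.sum_ofFn]
  exact Finset.sum_le_sum (fun i _ => hsub i)

lemma sum_nu_lt (lam nu : Fin k → ℕ) (hsub : ∀ i, nu i ≤ lam i) (r : Fin k)
    (hr : nu r < lam r) : (List.ofFn nu).sum < (List.ofFn lam).sum := by
  rw [List.sum_ofFn, List.sum_ofFn]
  exact Finset.sum_lt_sum (fun i _ => hsub i) ⟨r, Finset.mem_univ r, hr⟩


lemma extend_mem (lam nu : Fin k → ℕ) (r : Fin k) (hsub : ∀ i, nu i ≤ lam i)
    (hr1 : nu r < lam r) (hr2 : ∀ h : (r : ℕ) + 1 < k, lam ⟨(r : ℕ) + 1, h⟩ < lam r)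
    (T' : ℕ × ℕ → ℕ)
    (hT' : IsSkewSYT (List.ofFn (Function.update lam r (lam r - 1))) (List.ofFn nu) T') :
    IsSkewSYT (List.ofFn lam) (List.ofFn nu)
      (Function.update T' ((r : ℕ) + 1, lam r) ((List.ofFn lam).sum - (List.ofFn nu).sum)) := by
  classical
  set N := (List.ofFn lam).sum - (List.ofFn nu).sum with hNdef
  set c0 : ℕ × ℕ := ((r : ℕ) + 1, lam r) with hc0def
  set T := Function.update T' c0 N with hTdef
  have hN1 : 1 ≤ N := by
    have := sum_nu_lt lam nu hsub r hr1
    omega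
  have hcells := skewCells_decr lam nu r hr1
  have hc0 : c0 ∈ skewCells (List.ofFn lam) (List.ofFn nu) := newc_mem lam nu r hr1
  have hsum' : (List.ofFn (Function.update lam r (lam r - 1))).sum - (List.ofFn nu).sum
      = N - 1 := by
    rw [sum_decr lam r (by omega)]
    have := sum_nu_lt lam nu hsub r hr1
    omega
  obtain ⟨hz', hbij', hrow', hcol'⟩ := hT'
  rw [hsum', hcells] at hbij'
  rw [hcells] at hz' hrow' hcol'
  have hTc0 : T c0 = N := Function.update_self _ _ _
  have hTne : ∀ c, c ≠ c0 → T c = T' c := fun c hc => Function.update_of_ne hc _ _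
  have hval' : ∀ c ∈ skewCells (List.ofFn lam) (List.ofFn nu), c ≠ c0 →
      1 ≤ T' c ∧ T' c ≤ N - 1 := by
    intro c hc hne
    have := hbij'.mapsTo (Set.mem_diff_of_mem hc (by simpa using hne))
    rwa [Set.mem_Icc] at this
  refine ⟨?_, ⟨?_, ?_, ?_⟩, ?_, ?_⟩
  · -- zero outside
    intro c hc
    have hne : c ≠ c0 := fun h => hc (h ▸ hc0)
    rw [hTne c hne]
    exact hz' c (fun h => hc h.1)
  · -- MapsTo
    intro c hc
    rw [Set.mem_Icc]
    by_cases hne : c = c0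
    · subst hne; rw [hTc0]; exact ⟨hN1, le_rfl⟩
    · have := hval' c hc hne
      rw [hTne c hne]
      omega
  · -- InjOn
    intro c hc c' hc' heq
    by_cases h1 : c = c0 <;> by_cases h2 : c' = c0
    · rw [h1, h2]
    · exfalso
      rw [h1, hTc0, hTne c' h2] at heq
      have := hval' c' hc' h2
      omega
    · exfalso
      rw [h2, hTc0, hTne c h1] at heq
      have := hval' c hc h1
      omega
    · apply hbij'.injOn (Set.mem_diff_of_mem hc (by simpa using h1))
        (Set.mem_diff_of_mem hc' (by simpa using h2))
      rwa [hTne c h1, hTne c' h2] at heq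
  · -- SurjOn
    intro m hm
    rw [Set.mem_Icc] at hm
    by_cases hmN : m = N
    · exact ⟨c0, hc0, by rw [hTc0, hmN]⟩
    · have : m ∈ Set.Icc 1 (N - 1) := Set.mem_Icc.2 ⟨hm.1, by omega⟩
      obtain ⟨c, hcmem, hceq⟩ := hbij'.surjOn this
      have hcne : c ≠ c0 := by simpa using hcmem.2
      exact ⟨c, hcmem.1, by rw [hTne c hcne]; exact hceq⟩
  · -- rows
    intro i j hij hij1
    by_cases e1 : ((i, j + 1) : ℕ × ℕ) = c0
    · have e0 : ((i, j) : ℕ × ℕ) ≠ c0 := by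
        simp only [hc0def, Prod.mk.injEq, ne_eq, not_and] at e1 ⊢
        intro hi hj
        omega
      rw [e1, hTc0, hTne _ e0]
      have := hval' _ hij e0
      omega
    · by_cases e0 : ((i, j) : ℕ × ℕ) = c0
      · exfalso
        simp only [hc0def, Prod.mk.injEq] at e0
        obtain ⟨s, hs1, hs2, hs3⟩ := (mem_skewCells_iff lam nu _).1 hij1
        simp only at hs1 hs3
        have hsr : s = r := Fin.ext (by omega)
        rw [hsr] at hs3
        omega
      · rw [hTne _ e0, hTne _ e1]
        exact hrow' i j (Set.mem_diff_of_mem hij e0)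
          (Set.mem_diff_of_mem hij1 e1)
  · -- columns
    intro i j hij hij1
    by_cases e1 : ((i + 1, j) : ℕ × ℕ) = c0
    · have e0 : ((i, j) : ℕ × ℕ) ≠ c0 := by
        simp only [hc0def, Prod.mk.injEq, ne_eq, not_and] at e1 ⊢
        intro hi hj
        omega
      rw [e1, hTc0, hTne _ e0]
      have := hval' _ hij e0
      omega
    · by_cases e0 : ((i, j) : ℕ × ℕ) = c0
      · exfalso
        simp only [hc0def, Prod.mk.injEq] at e0
        obtain ⟨s, hs1, hs2, hs3⟩ := (mem_skewCells_iff lam nu _).1 hij1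
        simp only at hs1 hs3
        have hsk : (r : ℕ) + 1 < k := by
          have := s.isLt
          omega
        have hsr : s = (⟨(r : ℕ) + 1, hsk⟩ : Fin k) := Fin.ext (by simp; omega)
        rw [hsr] at hs3
        have := hr2 hsk
        omega
      · rw [hTne _ e0, hTne _ e1]
        exact hcol' i j (Set.mem_diff_of_mem hij e0)
          (Set.mem_diff_of_mem hij1 e1)


lemma restrict_mem (lam nu : Fin k → ℕ) (r : Fin k) (hsub : ∀ i, nu i ≤ lam i)
    (hr1 : nu r < lam r) (T : ℕ × ℕ → ℕ)
    (hT : IsSkewSYT (List.ofFn lam) (List.ofFn nu) T)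
    (hTc0 : T ((r : ℕ) + 1, lam r) = (List.ofFn lam).sum - (List.ofFn nu).sum) :
    IsSkewSYT (List.ofFn (Function.update lam r (lam r - 1))) (List.ofFn nu)
      (Function.update T ((r : ℕ) + 1, lam r) 0) := by
  classical
  set N := (List.ofFn lam).sum - (List.ofFn nu).sum with hNdef
  set c0 : ℕ × ℕ := ((r : ℕ) + 1, lam r) with hc0def
  set T' := Function.update T c0 0 with hT'def
  have hN1 : 1 ≤ N := by
    have := sum_nu_lt lam nu hsub r hr1
    omega
  have hcells := skewCells_decr lam nu r hr1
  have hc0 : c0 ∈ skewCells (List.ofFn lam) (List.ofFn nu) := newc_mem lam nu r hr1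
  have hsum' : (List.ofFn (Function.update lam r (lam r - 1))).sum - (List.ofFn nu).sum
      = N - 1 := by
    rw [sum_decr lam r (by omega)]
    have := sum_nu_lt lam nu hsub r hr1
    omega
  obtain ⟨hz, hbij, hrow, hcol⟩ := hT
  have hT'c0 : T' c0 = 0 := Function.update_self _ _ _
  have hT'ne : ∀ c, c ≠ c0 → T' c = T c := fun c hc => Function.update_of_ne hc _ _
  have hvalne : ∀ c ∈ skewCells (List.ofFn lam) (List.ofFn nu), c ≠ c0 →
      1 ≤ T c ∧ T c ≤ N - 1 := by
    intro c hc hne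
    have h1 := hbij.mapsTo hc
    rw [Set.mem_Icc] at h1
    have h2 : T c ≠ N := by
      intro h
      exact hne (hbij.injOn hc hc0 (h.trans hTc0.symm))
    exact ⟨h1.1, by omega⟩
  simp only [IsSkewSYT]
  rw [hcells, hsum']
  refine ⟨?_, ⟨?_, ?_, ?_⟩, ?_, ?_⟩
  · intro c hc
    by_cases hne : c = c0
    · rw [hne]; exact hT'c0
    · rw [hT'ne c hne]
      apply hz
      intro hmem
      exact hc (Set.mem_diff_of_mem hmem hne)
  · intro c hc
    rw [Set.mem_Icc, hT'ne c hc.2]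
    exact hvalne c hc.1 hc.2
  · intro c hc c' hc' heq
    rw [hT'ne c hc.2, hT'ne c' hc'.2] at heq
    exact hbij.injOn hc.1 hc'.1 heq
  · intro m hm
    rw [Set.mem_Icc] at hm
    have : m ∈ Set.Icc 1 N := Set.mem_Icc.2 ⟨hm.1, by omega⟩
    obtain ⟨c, hcS, hceq⟩ := hbij.surjOn this
    have hcne : c ≠ c0 := by
      intro h
      rw [h, hTc0] at hceq
      omega
    exact ⟨c, Set.mem_diff_of_mem hcS hcne, by rw [hT'ne c hcne]; exact hceq⟩
  · intro i j hij hij1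
    rw [hT'ne _ hij.2, hT'ne _ hij1.2]
    exact hrow i j hij.1 hij1.1
  · intro i j hij hij1
    rw [hT'ne _ hij.2, hT'ne _ hij1.2]
    exact hcol i j hij.1 hij1.1

lemma exists_max (lam nu : Fin k → ℕ) (hnu : Antitone nu)
    (hsub : ∀ i, nu i ≤ lam i) (hNpos : (List.ofFn nu).sum < (List.ofFn lam).sum)
    (T : ℕ × ℕ → ℕ) (hT : IsSkewSYT (List.ofFn lam) (List.ofFn nu) T) :
    ∃ r : Fin k, (nu r < lam r ∧ ∀ h : (r : ℕ) + 1 < k, lam ⟨(r : ℕ) + 1, h⟩ < lam r) ∧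
      T ((r : ℕ) + 1, lam r) = (List.ofFn lam).sum - (List.ofFn nu).sum := by
  set N := (List.ofFn lam).sum - (List.ofFn nu).sum with hNdef
  have hN1 : 1 ≤ N := by omega
  have hNmem : N ∈ Set.Icc 1 ((List.ofFn lam).sum - (List.ofFn nu).sum) :=
    Set.mem_Icc.2 ⟨hN1, le_rfl⟩
  obtain ⟨c, hcS, hceq⟩ := hT.2.1.surjOn hNmem
  obtain ⟨r, hr1, hr2, hr3⟩ := (mem_skewCells_iff lam nu c).1 hcS
  have hjmax : c.2 = lam r := by
    by_contra hne
    have hlt : c.2 + 1 ≤ lam r := by omega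
    have hmem2 : ((c.1, c.2 + 1) : ℕ × ℕ) ∈ skewCells (List.ofFn lam) (List.ofFn nu) :=
      (mem_skewCells_iff lam nu _).2 ⟨r, hr1, by omega, hlt⟩
    have hlt2 := hT.2.2.1 c.1 c.2 hcS hmem2
    have hle := hT.2.1.mapsTo hmem2
    rw [Set.mem_Icc] at hle
    rw [hceq] at hlt2
    omega
  have hTN : T ((r : ℕ) + 1, lam r) = N := by
    rw [← hr1, ← hjmax]
    exact hceq
  have hrlam : nu r < lam r := by omega
  refine ⟨r, ⟨hrlam, ?_⟩, hTN⟩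
  intro h
  by_contra hge
  push_neg at hge
  have hnu2 : nu ⟨(r : ℕ) + 1, h⟩ ≤ nu r := hnu (by rw [Fin.le_def]; simp)
  have hmem2 : (((r : ℕ) + 1 + 1, lam r) : ℕ × ℕ) ∈ skewCells (List.ofFn lam) (List.ofFn nu) :=
    (mem_skewCells_iff lam nu _).2 ⟨⟨(r : ℕ) + 1, h⟩, by simp, by simp; omega, by simp; omega⟩
  have hcol := hT.2.2.2 ((r : ℕ) + 1) (lam r) (newc_mem lam nu r hrlam) hmem2
  have hle := hT.2.1.mapsTo hmem2
  rw [Set.mem_Icc] at hle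
  rw [hTN] at hcol
  omega


lemma skew_rec (lam nu : Fin k → ℕ) (hnu : Antitone nu)
    (hsub : ∀ i, nu i ≤ lam i) (hNpos : (List.ofFn nu).sum < (List.ofFn lam).sum) :
    skewCount (List.ofFn lam) (List.ofFn nu) =
      ∑ r ∈ Finset.univ.filter
          (fun r : Fin k => nu r < lam r ∧ ∀ h : (r : ℕ) + 1 < k, lam ⟨(r : ℕ) + 1, h⟩ < lam r),
        skewCount (List.ofFn (Function.update lam r (lam r - 1))) (List.ofFn nu) := by
  classical
  set N := (List.ofFn lam).sum - (List.ofFn nu).sum with hNdef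
  have hN1 : 1 ≤ N := by omega
  set R := Finset.univ.filter
    (fun r : Fin k => nu r < lam r ∧ ∀ h : (r : ℕ) + 1 < k, lam ⟨(r : ℕ) + 1, h⟩ < lam r)
    with hRdef
  set E : Fin k → (ℕ × ℕ → ℕ) → (ℕ × ℕ → ℕ) :=
    fun r T' => Function.update T' ((r : ℕ) + 1, lam r) N with hEdef
  set S' : Fin k → Set (ℕ × ℕ → ℕ) :=
    fun r => {T | IsSkewSYT (List.ofFn (Function.update lam r (lam r - 1))) (List.ofFn nu) T}
    with hS'def
  have hmemR : ∀ r ∈ R, nu r < lam r ∧ ∀ h : (r : ℕ) + 1 < k, lam ⟨(r : ℕ) + 1, h⟩ < lam r := by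
    intro r hr
    exact (Finset.mem_filter.1 hr).2
  have hvallt : ∀ r ∈ R, ∀ T2 ∈ S' r, ∀ c : ℕ × ℕ, T2 c < N := by
    intro r hr T2 hT2 c
    have hr1 := (hmemR r hr).1
    by_cases hm : c ∈ skewCells (List.ofFn (Function.update lam r (lam r - 1))) (List.ofFn nu)
    · have := hT2.2.1.mapsTo hm
      rw [Set.mem_Icc, sum_decr lam r (by omega)] at this
      omega
    · rw [hT2.1 c hm]
      omega
  have hdecomp : {T | IsSkewSYT (List.ofFn lam) (List.ofFn nu) T} = ⋃ r ∈ R, E r '' S' r := by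
    ext T
    rw [Set.mem_iUnion₂]
    constructor
    · intro hT
      obtain ⟨r, ⟨hr1, hr2⟩, hTc0⟩ := exists_max lam nu hnu hsub hNpos T hT
      refine ⟨r, Finset.mem_filter.2 ⟨Finset.mem_univ r, hr1, hr2⟩, ?_⟩
      refine ⟨Function.update T ((r : ℕ) + 1, lam r) 0,
        restrict_mem lam nu r hsub hr1 T hT hTc0, ?_⟩
      funext c
      by_cases hc : c = (((r : ℕ) + 1, lam r) : ℕ × ℕ)
      · rw [hc]
        simp only [hEdef, Function.update_self]
        exact hTc0.symm
      · simp only [hEdef]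
        rw [Function.update_of_ne hc, Function.update_of_ne hc]
    · rintro ⟨r, hrR, T', hT', rfl⟩
      obtain ⟨hr1, hr2⟩ := hmemR r hrR
      exact extend_mem lam nu r hsub hr1 hr2 T' hT'
  have hinj : ∀ r ∈ R, Set.InjOn (E r) (S' r) := by
    intro r hrR T1 h1 T2 h2 heq
    have hnotmem : (((r : ℕ) + 1, lam r) : ℕ × ℕ) ∉
        skewCells (List.ofFn (Function.update lam r (lam r - 1))) (List.ofFn nu) := by
      rw [skewCells_decr lam nu r (hmemR r hrR).1]
      intro hmem
      exact hmem.2 rfl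
    funext c
    by_cases hc : c = (((r : ℕ) + 1, lam r) : ℕ × ℕ)
    · rw [hc, h1.1 _ hnotmem, h2.1 _ hnotmem]
    · have := congrFun heq c
      simp only [hEdef] at this
      rwa [Function.update_of_ne hc, Function.update_of_ne hc] at this
  have hdisj : ∀ r ∈ R, ∀ s ∈ R, r ≠ s → Disjoint (E r '' S' r) (E s '' S' s) := by
    intro r hrR s hsR hne
    rw [Set.disjoint_left]
    rintro T ⟨T1, hT1, rfl⟩ ⟨T2, hT2, heq⟩
    have hc0ne : (((s : ℕ) + 1, lam s) : ℕ × ℕ) ≠ (((r : ℕ) + 1, lam r) : ℕ × ℕ) := by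
      intro h
      rw [Prod.ext_iff] at h
      exact hne (Fin.ext (by omega)).symm
    have h1 : E r T1 ((s : ℕ) + 1, lam s) = T1 ((s : ℕ) + 1, lam s) := by
      simp only [hEdef]
      rw [Function.update_of_ne hc0ne]
    have h2 : E s T2 ((s : ℕ) + 1, lam s) = N := by
      simp only [hEdef]
      rw [Function.update_self]
    have h3 := hvallt r hrR T1 hT1 ((s : ℕ) + 1, lam s)
    rw [heq, h1] at h2
    omega
  rw [skewCount, hdecomp,
    ncard_biUnion R _ (fun r _ => (skew_finite _ _).image _) hdisj]
  apply Finset.sum_congr rfl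
  intro r hr
  rw [Set.ncard_image_of_injOn (hinj r hr)]
  rfl

end Comb

/-- `1/x!` for integer `x`, interpreted as `0` for negative `x`. -/
def gfac (x : ℤ) : ℚ := if 0 ≤ x then ((x.toNat).factorial : ℚ)⁻¹ else 0

def Mmat (k : ℕ) (l n : Fin k → ℤ) : Matrix (Fin k) (Fin k) ℚ :=
  fun a b => gfac (l b + (a : ℤ) - n a - (b : ℤ))

lemma gfac_nonneg_ne (x : ℤ) (hx : 0 ≤ x) : gfac x ≠ 0 := by
  simp only [gfac, if_pos hx]
  positivity

lemma gfac_sub_one (a : ℤ) (ha : 0 ≤ a) : gfac (a - 1) = a * gfac a := by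
  rcases eq_or_lt_of_le ha with h | h
  · simp [gfac, ← h]
  · have h1 : (0:ℤ) ≤ a - 1 := by omega
    simp only [gfac, if_pos ha, if_pos h1]
    have : a.toNat = (a-1).toNat + 1 := by omega
    rw [this, Nat.factorial_succ]
    have hfac : (((a-1).toNat.factorial : ℚ)) ≠ 0 := by positivity
    push_cast
    rw [mul_inv]
    have : ((a-1).toNat : ℚ) + 1 = (a : ℚ) := by
      have : ((a-1).toNat : ℤ) = a - 1 := Int.toNat_of_nonneg h1
      have := congrArg (fun z : ℤ => (z : ℚ)) this
      push_cast at this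
      linarith
    rw [this]
    field_simp

/-- Multinomial recurrence summed over decrement positions. -/
lemma key_multinomial {k : ℕ} (N : ℕ) (hN : 1 ≤ N) (a : Fin k → ℤ)
    (ha : ∑ i, a i = (N : ℤ)) :
    (N.factorial : ℚ) * ∏ i, gfac (a i) =
      ∑ r : Fin k, ((N-1).factorial : ℚ) * ∏ i, gfac (a i - if i = r then 1 else 0) := by
  by_cases hneg : ∃ i, a i < 0
  · obtain ⟨i, hi⟩ := hneg
    have h1 : gfac (a i) = 0 := by simp [gfac, not_le.2 hi]
    rw [Finset.prod_eq_zero (Finset.mem_univ i) h1, mul_zero]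
    symm
    apply Finset.sum_eq_zero
    intro r _
    have h2 : gfac (a i - if i = r then 1 else 0) = 0 := by
      have : a i - (if i = r then 1 else 0) < 0 := by split <;> omega
      simp only [gfac, if_neg (not_le.2 this)]
    rw [Finset.prod_eq_zero (Finset.mem_univ i) h2, mul_zero]
  · push_neg at hneg
    have hterm : ∀ r : Fin k, ((N-1).factorial : ℚ) * ∏ i, gfac (a i - if i = r then 1 else 0)
        = (a r : ℚ) * (((N-1).factorial : ℚ) * ∏ i, gfac (a i)) := by
      intro r
      have hprod : ∏ i, gfac (a i - if i = r then 1 else 0)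
          = (a r : ℚ) * ∏ i, gfac (a i) := by
        rw [← Finset.prod_erase_mul _ _ (Finset.mem_univ r),
            ← Finset.prod_erase_mul _ _ (Finset.mem_univ r)]
        have h1 : ∀ i ∈ Finset.univ.erase r,
            gfac (a i - if i = r then 1 else 0) = gfac (a i) := by
          intro i hi
          rw [if_neg (Finset.ne_of_mem_erase hi), sub_zero]
        rw [Finset.prod_congr rfl h1, if_pos rfl, gfac_sub_one _ (hneg r)]
        ring
      rw [hprod]; ring
    rw [Finset.sum_congr rfl (fun r _ => hterm r), ← Finset.sum_mul]
    have hsum : ∑ r : Fin k, (a r : ℚ) = (N : ℚ) := by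
      have := congrArg (fun z : ℤ => (z : ℚ)) ha
      push_cast at this
      exact this
    rw [hsum]
    have hNfac : (N.factorial : ℚ) = (N : ℚ) * ((N-1).factorial : ℚ) := by
      cases N with
      | zero => omega
      | succ m => simp [Nat.factorial_succ]
    rw [hNfac]; ring

/-- Determinant recurrence. -/
lemma det_rec {k : ℕ} (N : ℕ) (hN : 1 ≤ N) (l n : Fin k → ℤ)
    (hsum : ∑ i, l i - ∑ i, n i = (N : ℤ)) :
    (N.factorial : ℚ) * (Mmat k l n).det =
      ∑ r : Fin k, ((N-1).factorial : ℚ) *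
        (Mmat k (Function.update l r (l r - 1)) n).det := by
  simp only [Matrix.det_apply]
  rw [Finset.mul_sum]
  have step : ∀ σ : Equiv.Perm (Fin k),
      (N.factorial : ℚ) * (Equiv.Perm.sign σ • ∏ i, Mmat k l n (σ i) i) =
      ∑ r : Fin k, ((N-1).factorial : ℚ) *
        (Equiv.Perm.sign σ • ∏ i, Mmat k (Function.update l r (l r - 1)) n (σ i) i) := by
    intro σ
    have hperm1 : ∑ i : Fin k, n (σ i) = ∑ i, n i := Equiv.sum_comp σ n
    have hperm2 : ∑ i : Fin k, ((σ i : ℕ) : ℤ) = ∑ i : Fin k, ((i : ℕ) : ℤ) :=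
      Equiv.sum_comp σ (fun i => ((i : ℕ) : ℤ))
    have hkey := key_multinomial N hN (fun i => l i + ((σ i : ℕ) : ℤ) - n (σ i) - (i : ℕ))
      (by
        simp only [Finset.sum_sub_distrib, Finset.sum_add_distrib]
        rw [hperm1, hperm2]
        omega)
    have hQ : ∀ r : Fin k, (∏ i : Fin k,
        gfac (Function.update l r (l r - 1) i + ((σ i : ℕ):ℤ) - n (σ i) - (i:ℕ))) =
        ∏ i : Fin k, gfac (l i + ((σ i : ℕ):ℤ) - n (σ i) - (i:ℕ) - if i = r then 1 else 0) := by
      intro r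
      apply Finset.prod_congr rfl
      intro i _
      congr 1
      by_cases h : i = r
      · subst h; simp [Function.update_self]; ring
      · rw [Function.update_of_ne h, if_neg h]; ring
    simp only [Mmat, Units.smul_def, zsmul_eq_mul] at hkey ⊢
    rw [mul_left_comm, hkey, Finset.mul_sum]
    apply Finset.sum_congr rfl
    intro r _
    rw [hQ r]; ring
  rw [Finset.sum_congr rfl (fun σ _ => step σ), Finset.sum_comm]
  apply Finset.sum_congr rfl
  intro r _
  rw [Finset.mul_sum]

lemma det_zero_of_corner {k : ℕ} (M : Matrix (Fin k) (Fin k) ℚ) (r : Fin k)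
    (h : ∀ a b : Fin k, a ≤ r → r ≤ b → M a b = 0) : M.det = 0 := by
  rw [Matrix.det_apply]
  apply Finset.sum_eq_zero
  intro σ _
  have hex : ∃ i : Fin k, r ≤ i ∧ σ i ≤ r := by
    by_contra hc
    push_neg at hc
    have hsub : (Finset.Ici r).image σ ⊆ Finset.Ioi r := by
      intro b hb
      simp only [Finset.mem_image] at hb
      obtain ⟨i, hi, rfl⟩ := hb
      exact Finset.mem_Ioi.2 (hc i (Finset.mem_Ici.1 hi))
    have h1 := Finset.card_le_card hsub
    rw [Finset.card_image_of_injective _ σ.injective] at h1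
    rw [Fin.card_Ici, Fin.card_Ioi] at h1
    have := r.isLt
    omega
  obtain ⟨i, hi1, hi2⟩ := hex
  rw [Finset.prod_eq_zero (f := fun j => M (σ j) j) (Finset.mem_univ i) (h (σ i) i hi2 hi1),
    smul_zero]

lemma gfac_neg {x : ℤ} (hx : x < 0) : gfac x = 0 := by simp [gfac, not_le.2 hx]

/-- Vanishing when the decremented row coincides with the next row. -/
lemma det_update_zero_of_next {k : ℕ} (l n : Fin k → ℤ) (r : Fin k)
    (hr : (r : ℕ) + 1 < k) (heq : l ⟨(r : ℕ) + 1, hr⟩ = l r) :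
    (Mmat k (Function.update l r (l r - 1)) n).det = 0 := by
  apply Matrix.det_zero_of_column_eq (i := r) (j := ⟨(r : ℕ) + 1, hr⟩)
  · intro h
    have := congrArg Fin.val h
    simp at this
  · intro a
    simp only [Mmat]
    have h1 : Function.update l r (l r - 1) r = l r - 1 := Function.update_self _ _ _
    have hne : (⟨(r : ℕ) + 1, hr⟩ : Fin k) ≠ r := by
      intro h
      have := congrArg Fin.val h
      simp at this
    have h2 : Function.update l r (l r - 1) ⟨(r : ℕ) + 1, hr⟩ = l r :=
      (Function.update_of_ne hne _ _).trans heq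
    rw [h1, h2]
    congr 1
    simp
    ring
/-- Vanishing when row `r` of `λ` already equals row `r` of `ν`. -/
lemma det_update_zero_of_eq {k : ℕ} (l n : Fin k → ℤ) (r : Fin k)
    (h1 : ∀ a : Fin k, a ≤ r → n r ≤ n a)
    (h2 : ∀ b : Fin k, r ≤ b → l b ≤ l r)
    (h3 : l r = n r) :
    (Mmat k (Function.update l r (l r - 1)) n).det = 0 := by
  apply det_zero_of_corner _ r
  intro a b ha hb
  simp only [Mmat]
  apply gfac_neg
  have hna := h1 a ha
  have hav : (a : ℕ) ≤ (r : ℕ) := ha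
  have hbv : (r : ℕ) ≤ (b : ℕ) := hb
  by_cases hbr : b = r
  · subst hbr
    rw [Function.update_self]
    omega
  · have hlb := h2 b hb
    have hbv' : (r : ℕ) < (b : ℕ) := lt_of_le_of_ne hbv (by
      intro hc; exact hbr (Fin.ext hc.symm))
    rw [Function.update_of_ne hbr]
    omega

/-- Base case: `λ = ν` gives determinant 1. -/
lemma det_base {k : ℕ} (l : Fin k → ℤ) (hl : ∀ a b : Fin k, a ≤ b → l b ≤ l a) :
    (Mmat k l l).det = 1 := by
  rw [Matrix.det_of_lowerTriangular (Mmat k l l)]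
  · have : ∀ i : Fin k, Mmat k l l i i = 1 := by
      intro i
      simp only [Mmat]
      have : l i + (i : ℕ) - l i - (i : ℕ) = 0 := by ring
      rw [this]
      simp [gfac]
    simp [this]
  · intro i j hij
    simp only [Mmat]
    apply gfac_neg
    have h1 : l j ≤ l i := hl i j (le_of_lt hij)
    have h2 : (i : ℕ) < (j : ℕ) := hij
    omega

/-- Bridge: the theorem's RHS equals `N! * det (Mmat)`. -/
lemma rhs_eq_det {k : ℕ} (lam nu : Fin k → ℕ) :
    (∑ σ : Equiv.Perm (Fin k), ((Equiv.Perm.sign σ : ℤ) : ℚ) *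
        (if ∀ i : Fin k, (nu (σ i) : ℤ) + (i : ℕ) ≤ (lam i : ℤ) + ((σ i : ℕ) : ℤ)
         then (Nat.factorial (∑ i, lam i - ∑ i, nu i) : ℚ) /
           ∏ i : Fin k,
             (Nat.factorial ((lam i : ℤ) + ((σ i : ℕ) : ℤ) - (nu (σ i) : ℤ) - ((i : ℕ) : ℤ)).toNat : ℚ)
         else 0)) =
    ((∑ i, lam i - ∑ i, nu i).factorial : ℚ) *
      (Mmat k (fun i => (lam i : ℤ)) (fun i => (nu i : ℤ))).det := by
  rw [Matrix.det_apply, Finset.mul_sum]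
  apply Finset.sum_congr rfl
  intro σ _
  simp only [Mmat, Units.smul_def, zsmul_eq_mul]
  by_cases h : ∀ i : Fin k, (nu (σ i) : ℤ) + (i : ℕ) ≤ (lam i : ℤ) + ((σ i : ℕ) : ℤ)
  · rw [if_pos h]
    have hprod : (∏ i : Fin k, gfac ((lam i : ℤ) + ((σ i : ℕ) : ℤ) - (nu (σ i) : ℤ) - ((i : ℕ) : ℤ))) =
        (∏ i : Fin k,
          (Nat.factorial ((lam i : ℤ) + ((σ i : ℕ) : ℤ) - (nu (σ i) : ℤ) - ((i : ℕ) : ℤ)).toNat : ℚ))⁻¹ := by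
      rw [← Finset.prod_inv_distrib]
      apply Finset.prod_congr rfl
      intro i _
      have hi := h i
      rw [gfac, if_pos (by omega)]
    rw [hprod, div_eq_mul_inv]
    ring
  · rw [if_neg h]
    push_neg at h
    obtain ⟨i, hi⟩ := h
    have : gfac ((lam i : ℤ) + ((σ i : ℕ) : ℤ) - (nu (σ i) : ℤ) - ((i : ℕ) : ℤ)) = 0 :=
      gfac_neg (by omega)
    rw [Finset.prod_eq_zero (Finset.mem_univ i) this]
    ring

section Main

variable {k : ℕ}

lemma decr_antitone (lam : Fin k → ℕ) (r : Fin k) (hlam : Antitone lam)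
    (hr2 : ∀ h : (r : ℕ) + 1 < k, lam ⟨(r : ℕ) + 1, h⟩ < lam r) :
    Antitone (Function.update lam r (lam r - 1)) := by
  intro a b hab
  have hv : (a : ℕ) ≤ (b : ℕ) := hab
  by_cases hb : b = r
  · by_cases ha : a = r
    · rw [ha, hb]
    · rw [hb, Function.update_self, Function.update_of_ne ha]
      have h1 : lam b ≤ lam a := hlam hab
      rw [hb] at h1
      omega
  · rw [Function.update_of_ne hb]
    by_cases ha : a = r
    · rw [ha, Function.update_self]
      have hne : (b : ℕ) ≠ (r : ℕ) := fun h => hb (Fin.ext h)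
      have hav : (a : ℕ) = (r : ℕ) := by rw [ha]
      have hrb : (r : ℕ) < (b : ℕ) := by omega
      have h : (r : ℕ) + 1 < k := by have := b.isLt; omega
      have h1 := hr2 h
      have h2 : lam b ≤ lam ⟨(r : ℕ) + 1, h⟩ := hlam (by rw [Fin.le_def]; simp; omega)
      omega
    · rw [Function.update_of_ne ha]; exact hlam hab

lemma eq_case (lam nu : Fin k → ℕ) (hlam : Antitone lam)
    (hsub : ∀ i, nu i ≤ lam i) (hEq : ∑ i, nu i = ∑ i, lam i) :
    (skewCount (List.ofFn lam) (List.ofFn nu) : ℚ) =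
      ((∑ i, lam i - ∑ i, nu i).factorial : ℚ) *
      (Mmat k (fun i => (lam i : ℤ)) (fun i => (nu i : ℤ))).det := by
  have hln : lam = nu := by
    funext i
    by_contra hne
    have h1 : nu i < lam i := lt_of_le_of_ne (hsub i) (Ne.symm hne)
    have := Finset.sum_lt_sum (fun j _ => hsub j) ⟨i, Finset.mem_univ i, h1⟩
    omega
  subst hln
  rw [skew_base]
  have hfac : ∑ i, lam i - ∑ i, lam i = 0 := by omega
  rw [hfac]
  rw [det_base (fun i => (lam i : ℤ)) (fun a b hab => Int.ofNat_le.2 (hlam hab))]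
  norm_num

lemma main_aux (n : ℕ) : ∀ (lam nu : Fin k → ℕ), ∑ i, lam i ≤ n → Antitone lam →
    Antitone nu → (∀ i, nu i ≤ lam i) →
    (skewCount (List.ofFn lam) (List.ofFn nu) : ℚ) =
      ((∑ i, lam i - ∑ i, nu i).factorial : ℚ) *
      (Mmat k (fun i => (lam i : ℤ)) (fun i => (nu i : ℤ))).det := by
  induction n with
  | zero =>
    intro lam nu hsum hlam hnu hsub
    apply eq_case lam nu hlam hsub
    have h1 : ∑ i, nu i ≤ ∑ i, lam i := Finset.sum_le_sum (fun i _ => hsub i)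
    omega
  | succ n ih =>
    intro lam nu hsum hlam hnu hsub
    by_cases hEq : ∑ i, nu i = ∑ i, lam i
    · exact eq_case lam nu hlam hsub hEq
    · have hle : ∑ i, nu i ≤ ∑ i, lam i := Finset.sum_le_sum (fun i _ => hsub i)
      have hNpos : ∑ i, nu i < ∑ i, lam i := lt_of_le_of_ne hle hEq
      have hNposL : (List.ofFn nu).sum < (List.ofFn lam).sum := by
        rw [List.sum_ofFn, List.sum_ofFn]; exact hNpos
      set N := ∑ i, lam i - ∑ i, nu i with hNdef
      have hN1 : 1 ≤ N := by omega
      rw [skew_rec lam nu hnu hsub hNposL, Nat.cast_sum]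
      set R := Finset.univ.filter
        (fun r : Fin k => nu r < lam r ∧ ∀ h : (r : ℕ) + 1 < k, lam ⟨(r : ℕ) + 1, h⟩ < lam r)
        with hRdef
      have hstep : ∀ r ∈ R,
          ((skewCount (List.ofFn (Function.update lam r (lam r - 1))) (List.ofFn nu) : ℕ) : ℚ)
          = ((N - 1).factorial : ℚ) *
            (Mmat k (Function.update (fun i => (lam i : ℤ)) r ((lam r : ℤ) - 1))
              (fun i => (nu i : ℤ))).det := by
        intro r hr
        obtain ⟨hr1, hr2⟩ := (Finset.mem_filter.1 hr).2
        have hsum' : ∑ i, Function.update lam r (lam r - 1) i = ∑ i, lam i - 1 := by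
          rw [Finset.sum_update_of_mem (Finset.mem_univ r)]
          have h2 := Finset.add_sum_erase Finset.univ lam (Finset.mem_univ r)
          rw [Finset.erase_eq] at h2
          omega
        have ihr := ih (Function.update lam r (lam r - 1)) nu
          (by omega)
          (decr_antitone lam r hlam hr2) hnu
          (fun i => by
            by_cases h : i = r
            · subst h; rw [Function.update_self]; omega
            · rw [Function.update_of_ne h]; exact hsub i)
        rw [ihr]
        have e1 : ∑ i, Function.update lam r (lam r - 1) i - ∑ i, nu i = N - 1 := by omega
        have e2 : (fun i => ((Function.update lam r (lam r - 1) i : ℕ) : ℤ)) =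
            Function.update (fun i => (lam i : ℤ)) r ((lam r : ℤ) - 1) := by
          funext i
          by_cases h : i = r
          · subst h
            rw [Function.update_self, Function.update_self]
            push_cast [Nat.cast_sub (by omega : 1 ≤ lam i)]
            ring
          · rw [Function.update_of_ne h, Function.update_of_ne h]
        rw [e1, e2]
      rw [Finset.sum_congr rfl hstep]
      have hvanish : ∀ r ∈ Finset.univ, r ∉ R →
          ((N - 1).factorial : ℚ) *
            (Mmat k (Function.update (fun i => (lam i : ℤ)) r ((lam r : ℤ) - 1))
              (fun i => (nu i : ℤ))).det = 0 := by
        intro r _ hrR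
        rw [hRdef, Finset.mem_filter] at hrR
        push_neg at hrR
        have hrR2 := hrR (Finset.mem_univ r)
        by_cases hcase : nu r < lam r
        · obtain ⟨h, hge⟩ := hrR2 hcase
          have heq2 : lam ⟨(r : ℕ) + 1, h⟩ = lam r :=
            le_antisymm (hlam (by rw [Fin.le_def]; simp)) hge
          rw [det_update_zero_of_next (fun i => (lam i : ℤ)) (fun i => (nu i : ℤ)) r h
            (congrArg (fun m : ℕ => (m : ℤ)) heq2)]
          ring
        · have heq3 : lam r = nu r := by
            have := hsub r
            omega
          rw [det_update_zero_of_eq (fun i => (lam i : ℤ)) (fun i => (nu i : ℤ)) r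
            (fun a ha => Int.ofNat_le.2 (hnu ha))
            (fun b hb => Int.ofNat_le.2 (hlam hb))
            (congrArg (fun m : ℕ => (m : ℤ)) heq3)]
          ring
      rw [Finset.sum_subset (Finset.subset_univ R) hvanish]
      rw [← det_rec N hN1 (fun i => (lam i : ℤ)) (fun i => (nu i : ℤ))
        (by
          have h1 : ((∑ i, lam i : ℕ) : ℤ) = ∑ i, (lam i : ℤ) := by push_cast; rfl
          have h2 : ((∑ i, nu i : ℕ) : ℤ) = ∑ i, (nu i : ℤ) := by push_cast; rfl
          rw [← h1, ← h2]
          omega)]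

end Main

/-- The Aitken–Feit–Steinberg determinantal formula (via the reflection principle):
for partitions `ν ⊆ λ` with at most `k` parts (padded with zeros),
`f^{λ/ν} = ∑_{σ ∈ S_k} sgn(σ) · (|λ|−|ν|)! / ∏_i (λ_i − ν_{σ(i)} + σ(i) − i)!`,
where any summand containing the factorial of a negative integer is `0`. -/
theorem skew_syt_count_det (k : ℕ) (lam nu : Fin k → ℕ)
    (hlam : Antitone lam) (hnu : Antitone nu) (hsub : ∀ i, nu i ≤ lam i) :
    (skewCount (List.ofFn lam) (List.ofFn nu) : ℚ) =
      ∑ σ : Equiv.Perm (Fin k), ((Equiv.Perm.sign σ : ℤ) : ℚ) *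
        (if ∀ i : Fin k, (nu (σ i) : ℤ) + (i : ℕ) ≤ (lam i : ℤ) + ((σ i : ℕ) : ℤ)
         then (Nat.factorial (∑ i, lam i - ∑ i, nu i) : ℚ) /
           ∏ i : Fin k,
             (Nat.factorial ((lam i : ℤ) + ((σ i : ℕ) : ℤ) - (nu (σ i) : ℤ) - ((i : ℕ) : ℤ)).toNat : ℚ)
         else 0) := by
  rw [rhs_eq_det lam nu]
  exact main_aux (∑ i, lam i) lam nu le_rfl hlam hnu hsub
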